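/- Let W be an irreducible T-module with endpoint r and diameter d. Then for all i ∈ ℤ and all j with r ≤ j ≤ r+d, Q_i·(E*_j W) = E*_{i+j} W. -/

import Mathlib

open Matrix BigOperators

noncomputable section

variable {X : Type*} [Fintype X] [DecidableEq X]

/-- The adjacency matrix of a graph, over ℂ. -/
def adjMat (G : SimpleGraph X) [DecidableRel G.Adj] : Matrix X X ℂ :=
  Matrix.of fun y z => if G.Adj y z then 1 else 0

/-- The dual idempotent `E*_i`: diagonal 0-1 matrix projecting onto
vertices at distance `i` from `x` (zero for `i` outside the distance range). -/
def Estar (G : SimpleGraph X) (x : X) (i : ℤ) : Matrix X X ℂ :=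
  Matrix.diagonal fun y => if (G.dist x y : ℤ) = i then 1 else 0

/-- The lowering matrix `L = Σ_{i=1}^D E*_{i-1} A E*_i`. -/
def lowerM (G : SimpleGraph X) [DecidableRel G.Adj] (x : X) (D : ℕ) : Matrix X X ℂ :=
  ∑ i ∈ Finset.Icc 1 D, Estar G x ((i : ℤ) - 1) * adjMat G * Estar G x i

/-- The flat matrix `F = Σ_{i=0}^D E*_i A E*_i`. -/
def flatM (G : SimpleGraph X) [DecidableRel G.Adj] (x : X) (D : ℕ) : Matrix X X ℂ :=
  ∑ i ∈ Finset.range (D + 1), Estar G x i * adjMat G * Estar G x i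

/-- The raising matrix `R = Σ_{i=0}^{D-1} E*_{i+1} A E*_i`. -/
def raiseM (G : SimpleGraph X) [DecidableRel G.Adj] (x : X) (D : ℕ) : Matrix X X ℂ :=
  ∑ i ∈ Finset.range D, Estar G x ((i : ℤ) + 1) * adjMat G * Estar G x i

/-- The subconstituent (Terwilliger) algebra `T`, generated by `A` and the `E*_i`. -/
def Talg (G : SimpleGraph X) [DecidableRel G.Adj] (x : X) (D : ℕ) :
    Subalgebra ℂ (Matrix X X ℂ) :=
  Algebra.adjoin ℂ (insert (adjMat G) (Estar G x '' Set.Icc (0 : ℤ) (D : ℤ)))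

/-- The quantum adjacency algebra `Q`, generated by `L, F, R`. -/
def Qalg (G : SimpleGraph X) [DecidableRel G.Adj] (x : X) (D : ℕ) :
    Subalgebra ℂ (Matrix X X ℂ) :=
  Algebra.adjoin ℂ {lowerM G x D, flatM G x D, raiseM G x D}

/-- The dual adjacency algebra `M*`, the span of the `E*_i`. -/
def Mstar (G : SimpleGraph X) (x : X) (D : ℕ) : Submodule ℂ (Matrix X X ℂ) :=
  Submodule.span ℂ (Estar G x '' Set.Icc (0 : ℤ) (D : ℤ))

/-- The graded component `T_n = Σ_i E*_{i+n} T E*_i`. -/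
def Tgraded (G : SimpleGraph X) [DecidableRel G.Adj] (x : X) (D : ℕ) (n : ℤ) :
    Submodule ℂ (Matrix X X ℂ) :=
  Submodule.span ℂ
    {M | ∃ i : ℤ, ∃ S ∈ Talg G x D, M = Estar G x (i + n) * S * Estar G x i}

/-- The graded component `Q_n = Q ∩ T_n`. -/
def Qgraded (G : SimpleGraph X) [DecidableRel G.Adj] (x : X) (D : ℕ) (n : ℤ) :
    Submodule ℂ (Matrix X X ℂ) :=
  (Subalgebra.toSubmodule (Qalg G x D)) ⊓ Tgraded G x D n

/-- `W` is an irreducible module for the algebra `A₀ ⊆ Mat_X(ℂ)` (acting on `V = ℂ^X`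
by matrix-vector multiplication). -/
def IsIrredMod (A₀ : Subalgebra ℂ (Matrix X X ℂ)) (W : Submodule ℂ (X → ℂ)) : Prop :=
  (∀ S ∈ A₀, ∀ w ∈ W, S.mulVec w ∈ W) ∧ W ≠ ⊥ ∧
    ∀ W' : Submodule ℂ (X → ℂ), W' ≤ W →
      (∀ S ∈ A₀, ∀ w ∈ W', S.mulVec w ∈ W') → W' = ⊥ ∨ W' = W

/-- The subspace `E*_i W`. -/
def Emap (G : SimpleGraph X) (x : X) (i : ℤ) (W : Submodule ℂ (X → ℂ)) :
    Submodule ℂ (X → ℂ) :=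
  W.map (Estar G x i).mulVecLin

/-- The subspace `P · W` spanned by all `S w`, `S ∈ P`, `w ∈ W`. -/
def actSp (P : Submodule ℂ (Matrix X X ℂ)) (W : Submodule ℂ (X → ℂ)) :
    Submodule ℂ (X → ℂ) :=
  Submodule.span ℂ {v | ∃ S ∈ P, ∃ w ∈ W, v = S.mulVec w}

/-- The statement: `W` has endpoint `r` and diameter `d`, i.e. `E*_i W ≠ 0`
iff `r ≤ i ≤ r + d`. -/
def HasEndpointDiam (G : SimpleGraph X) (x : X) (W : Submodule ℂ (X → ℂ))
    (r d : ℕ) : Prop :=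
  ∀ i : ℤ, Emap G x i W ≠ ⊥ ↔ ((r : ℤ) ≤ i ∧ i ≤ (r : ℤ) + (d : ℤ))

/-- `σ` restricts to an isomorphism of `Q`-modules from `U` to `W`. -/
def IsQIso (G : SimpleGraph X) [DecidableRel G.Adj] (x : X) (D : ℕ)
    (U W : Submodule ℂ (X → ℂ)) (σ : (X → ℂ) →ₗ[ℂ] (X → ℂ)) : Prop :=
  U.map σ = W ∧ (∀ u ∈ U, σ u = 0 → u = 0) ∧
    ∀ S ∈ Qalg G x D, ∀ u ∈ U, σ (S.mulVec u) = S.mulVec (σ u)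

/-- `σ` restricts to an isomorphism of `T`-modules from `U` to `W`. -/
def IsTIso (G : SimpleGraph X) [DecidableRel G.Adj] (x : X) (D : ℕ)
    (U W : Submodule ℂ (X → ℂ)) (σ : (X → ℂ) →ₗ[ℂ] (X → ℂ)) : Prop :=
  U.map σ = W ∧ (∀ u ∈ U, σ u = 0 → u = 0) ∧
    ∀ S ∈ Talg G x D, ∀ u ∈ U, σ (S.mulVec u) = S.mulVec (σ u)

/-- `σ` restricts to a quasi-isomorphism of `T`-modules from `U` to `W`,
with endpoint shift `n`. -/
def IsQuasiIso (G : SimpleGraph X) [DecidableRel G.Adj] (x : X) (D : ℕ)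
    (U W : Submodule ℂ (X → ℂ)) (σ : (X → ℂ) →ₗ[ℂ] (X → ℂ)) (n : ℤ) : Prop :=
  U.map σ = W ∧ (∀ u ∈ U, σ u = 0 → u = 0) ∧
    (∀ u ∈ U, σ ((lowerM G x D).mulVec u) = (lowerM G x D).mulVec (σ u)) ∧
    (∀ u ∈ U, σ ((flatM G x D).mulVec u) = (flatM G x D).mulVec (σ u)) ∧
    (∀ u ∈ U, σ ((raiseM G x D).mulVec u) = (raiseM G x D).mulVec (σ u)) ∧
    ∀ i : ℤ, ∀ u ∈ U, σ ((Estar G x i).mulVec u) = (Estar G x (i + n)).mulVec (σ u)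

end

noncomputable section Aux
set_option linter.unusedSectionVars false

open Matrix

variable {X : Type*} [Fintype X] [DecidableEq X]
variable (G : SimpleGraph X) [DecidableRel G.Adj] (x : X) (D : ℕ)

lemma Estar_mul_Estar (a b : ℤ) :
    Estar G x a * Estar G x b = if a = b then Estar G x a else 0 := by
  unfold Estar
  rw [Matrix.diagonal_mul_diagonal]
  split_ifs with h
  · subst h
    ext y z
    by_cases hyz : y = z
    · subst hyz
      rw [Matrix.diagonal_apply_eq, Matrix.diagonal_apply_eq]
      by_cases hy : (G.dist x y : ℤ) = a
      · rw [if_pos hy]; norm_num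
      · rw [if_neg hy]; norm_num
    · rw [Matrix.diagonal_apply_ne _ hyz, Matrix.diagonal_apply_ne _ hyz]
  · ext y z
    by_cases hyz : y = z
    · subst hyz
      rw [Matrix.diagonal_apply_eq, Matrix.zero_apply]
      by_cases hy : (G.dist x y : ℤ) = a
      · rw [if_pos hy, if_neg (show ¬(G.dist x y : ℤ) = b by omega), mul_zero]
      · rw [if_neg hy, zero_mul]
    · rw [Matrix.diagonal_apply_ne _ hyz, Matrix.zero_apply]

lemma Estar_eq_zero (hD : ∀ y, G.dist x y ≤ D) {k : ℤ} (h : k < 0 ∨ (D : ℤ) < k) :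
    Estar G x k = 0 := by
  ext y z
  have h1 := hD y
  simp only [Estar, Matrix.diagonal_apply, Matrix.zero_apply]
  split_ifs with h2 h3
  · exfalso; omega
  · rfl
  · rfl

lemma sum_Estar (hD : ∀ y, G.dist x y ≤ D) :
    ∑ k ∈ Finset.range (D + 1), Estar G x (k : ℤ) = 1 := by
  ext y z
  simp only [Matrix.sum_apply, Estar, Matrix.diagonal_apply, Matrix.one_apply]
  by_cases h : y = z
  · subst h
    rw [if_pos rfl]
    have hc : ∀ k ∈ Finset.range (D + 1),
        (if y = y then (if (G.dist x y : ℤ) = (k : ℤ) then (1 : ℂ) else 0) else 0)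
          = if G.dist x y = k then 1 else 0 := by
      intro k _
      rw [if_pos rfl]
      simp [Nat.cast_inj]
    rw [Finset.sum_congr rfl hc, Finset.sum_ite_eq]
    rw [if_pos (Finset.mem_range.mpr (Nat.lt_succ_of_le (hD y)))]
  · simp [h]

lemma EAE_apply (a b : ℤ) (y z : X) :
    (Estar G x a * adjMat G * Estar G x b) y z =
      (if (G.dist x y : ℤ) = a then 1 else 0) * adjMat G y z *
        (if (G.dist x z : ℤ) = b then 1 else 0) := by
  simp only [Estar, Matrix.mul_diagonal, Matrix.diagonal_mul]

lemma adj_decomp (hG : G.Connected) (hD : ∀ y, G.dist x y ≤ D) :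
    adjMat G = lowerM G x D + flatM G x D + raiseM G x D := by
  ext y z
  simp only [Matrix.add_apply, lowerM, flatM, raiseM, Matrix.sum_apply, EAE_apply]
  by_cases hadj : G.Adj y z
  · have hA : adjMat G y z = 1 := by simp [adjMat, hadj]
    have hdyz : G.dist y z = 1 := (SimpleGraph.dist_eq_one_iff_adj).mpr hadj
    have hdzy : G.dist z y = 1 := (SimpleGraph.dist_eq_one_iff_adj).mpr hadj.symm
    have ht1 : G.dist x z ≤ G.dist x y + 1 := by
      have := hG.dist_triangle (u := x) (v := y) (w := z); omega
    have ht2 : G.dist x y ≤ G.dist x z + 1 := by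
      have := hG.dist_triangle (u := x) (v := z) (w := y); omega
    have hp : G.dist x y ≤ D := hD y
    have hq : G.dist x z ≤ D := hD z
    set p := G.dist x y with hpdef
    set q := G.dist x z with hqdef
    have e1 : ∑ i ∈ Finset.Icc 1 D,
        ((if (p : ℤ) = (i : ℤ) - 1 then (1 : ℂ) else 0) * adjMat G y z *
          (if (q : ℤ) = (i : ℤ) then 1 else 0)) = if q = p + 1 then 1 else 0 := by
      rw [hA]
      by_cases hc : q = p + 1
      · rw [if_pos hc]
        rw [Finset.sum_eq_single_of_mem q (Finset.mem_Icc.mpr ⟨by omega, by omega⟩)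
          (fun i _ hi => by
            rw [if_neg (show ¬((q : ℤ) = (i : ℤ)) from fun hh => hi (by omega))]; ring)]
        rw [if_pos (show (p : ℤ) = (q : ℤ) - 1 by omega), if_pos rfl]; norm_num
      · rw [if_neg hc, Finset.sum_eq_zero]
        intro i _
        by_cases h1 : (q : ℤ) = (i : ℤ)
        · rw [if_neg (show ¬((p : ℤ) = (i : ℤ) - 1) from by omega)]; ring
        · rw [if_neg h1]; ring
    have e2 : ∑ i ∈ Finset.range (D + 1),
        ((if (p : ℤ) = (i : ℤ) then (1 : ℂ) else 0) * adjMat G y z *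
          (if (q : ℤ) = (i : ℤ) then 1 else 0)) = if q = p then 1 else 0 := by
      rw [hA]
      by_cases hc : q = p
      · rw [if_pos hc]
        rw [Finset.sum_eq_single_of_mem p (Finset.mem_range.mpr (by omega))
          (fun i _ hi => by
            rw [if_neg (show ¬((p : ℤ) = (i : ℤ)) from fun hh => hi (by omega))]; ring)]
        rw [if_pos rfl, if_pos (show (q : ℤ) = (p : ℤ) by omega)]; norm_num
      · rw [if_neg hc, Finset.sum_eq_zero]
        intro i _
        by_cases h1 : (p : ℤ) = (i : ℤ)
        · rw [if_neg (show ¬((q : ℤ) = (i : ℤ)) from by omega)]; ring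
        · rw [if_neg h1]; ring
    have e3 : ∑ i ∈ Finset.range D,
        ((if (p : ℤ) = (i : ℤ) + 1 then (1 : ℂ) else 0) * adjMat G y z *
          (if (q : ℤ) = (i : ℤ) then 1 else 0)) = if p = q + 1 then 1 else 0 := by
      rw [hA]
      by_cases hc : p = q + 1
      · rw [if_pos hc]
        rw [Finset.sum_eq_single_of_mem q (Finset.mem_range.mpr (by omega))
          (fun i _ hi => by
            rw [if_neg (show ¬((q : ℤ) = (i : ℤ)) from fun hh => hi (by omega))]; ring)]
        rw [if_pos (show (p : ℤ) = (q : ℤ) + 1 by omega), if_pos rfl]; norm_num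
      · rw [if_neg hc, Finset.sum_eq_zero]
        intro i _
        by_cases h1 : (q : ℤ) = (i : ℤ)
        · rw [if_neg (show ¬((p : ℤ) = (i : ℤ) + 1) from by omega)]; ring
        · rw [if_neg h1]; ring
    rw [e1, e2, e3, hA]
    split_ifs <;> (try (exfalso; omega)) <;> norm_num
  · have hA : adjMat G y z = 0 := by simp [adjMat, hadj]
    rw [hA]
    simp

lemma adjMat_mem_T : adjMat G ∈ Talg G x D :=
  Algebra.subset_adjoin (Set.mem_insert _ _)

lemma Estar_mem_T (hD : ∀ y, G.dist x y ≤ D) (k : ℤ) : Estar G x k ∈ Talg G x D := by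
  by_cases hk : 0 ≤ k ∧ k ≤ (D : ℤ)
  · exact Algebra.subset_adjoin (Set.mem_insert_iff.mpr (Or.inr ⟨k, ⟨hk.1, hk.2⟩, rfl⟩))
  · rw [Estar_eq_zero G x D hD (by omega)]
    exact zero_mem _

lemma lowerM_mem_T : lowerM G x D ∈ Talg G x D := by
  refine Subalgebra.sum_mem _ (fun i hi => ?_)
  have hi' := Finset.mem_Icc.mp hi
  exact mul_mem (mul_mem (Algebra.subset_adjoin (Set.mem_insert_iff.mpr
      (Or.inr ⟨(i : ℤ) - 1, ⟨by omega, by omega⟩, rfl⟩))) (adjMat_mem_T G x D))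
    (Algebra.subset_adjoin (Set.mem_insert_iff.mpr (Or.inr ⟨(i : ℤ), ⟨by omega, by omega⟩, rfl⟩)))

lemma flatM_mem_T : flatM G x D ∈ Talg G x D := by
  refine Subalgebra.sum_mem _ (fun i hi => ?_)
  have hi' := Finset.mem_range.mp hi
  exact mul_mem (mul_mem (Algebra.subset_adjoin (Set.mem_insert_iff.mpr
      (Or.inr ⟨(i : ℤ), ⟨by omega, by omega⟩, rfl⟩))) (adjMat_mem_T G x D))
    (Algebra.subset_adjoin (Set.mem_insert_iff.mpr (Or.inr ⟨(i : ℤ), ⟨by omega, by omega⟩, rfl⟩)))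

lemma raiseM_mem_T : raiseM G x D ∈ Talg G x D := by
  refine Subalgebra.sum_mem _ (fun i hi => ?_)
  have hi' := Finset.mem_range.mp hi
  exact mul_mem (mul_mem (Algebra.subset_adjoin (Set.mem_insert_iff.mpr
      (Or.inr ⟨(i : ℤ) + 1, ⟨by omega, by omega⟩, rfl⟩))) (adjMat_mem_T G x D))
    (Algebra.subset_adjoin (Set.mem_insert_iff.mpr (Or.inr ⟨(i : ℤ), ⟨by omega, by omega⟩, rfl⟩)))

lemma Qalg_le_Talg : Qalg G x D ≤ Talg G x D := by
  apply Algebra.adjoin_le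
  intro S hS
  rcases hS with rfl | hS
  · exact lowerM_mem_T G x D
  rcases hS with rfl | hS
  · exact flatM_mem_T G x D
  rcases hS with rfl
  exact raiseM_mem_T G x D

lemma Tgraded_comm {n : ℤ} {S : Matrix X X ℂ} (hS : S ∈ Tgraded G x D n) (k : ℤ) :
    Estar G x k * S = S * Estar G x (k - n) := by
  induction hS using Submodule.span_induction with
  | mem S hS =>
    obtain ⟨i, S', hS', rfl⟩ := hS
    rw [← mul_assoc, ← mul_assoc, Estar_mul_Estar, mul_assoc, mul_assoc, Estar_mul_Estar]
    by_cases h : k = i + n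
    · rw [if_pos h, if_pos (by omega), h, mul_assoc]
    · rw [if_neg h, if_neg (by omega)]
      simp
  | zero => simp
  | add a b _ _ ha hb => rw [mul_add, ha, hb, add_mul]
  | smul c a _ ha => rw [mul_smul_comm, ha, smul_mul_assoc]

lemma Tgraded_mul {m n : ℤ} {S S' : Matrix X X ℂ} (hST : S ∈ Talg G x D)
    (hS : S ∈ Tgraded G x D m) (hS' : S' ∈ Tgraded G x D n) :
    S * S' ∈ Tgraded G x D (m + n) := by
  induction hS' using Submodule.span_induction with
  | mem S' h =>
    obtain ⟨i, S₂, hS₂, rfl⟩ := h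
    apply Submodule.subset_span
    refine ⟨i, S * S₂, mul_mem hST hS₂, ?_⟩
    have hc := Tgraded_comm G x D hS (i + n + m)
    rw [show i + n + m - m = i + n by ring] at hc
    rw [show i + (m + n) = i + n + m by ring]
    calc S * (Estar G x (i + n) * S₂ * Estar G x i)
        = (Estar G x (i + n + m) * S) * S₂ * Estar G x i := by
          rw [hc]; rw [mul_assoc, mul_assoc, mul_assoc]
      _ = Estar G x (i + n + m) * (S * S₂) * Estar G x i := by
          simp only [mul_assoc]
  | zero => rw [mul_zero]; exact zero_mem _
  | add a b _ _ ha hb => rw [mul_add]; exact add_mem ha hb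
  | smul c a _ ha => rw [mul_smul_comm]; exact Submodule.smul_mem _ _ ha

lemma mem_Qgraded {n : ℤ} {S : Matrix X X ℂ} (h1 : S ∈ Qalg G x D)
    (h2 : S ∈ Tgraded G x D n) : S ∈ Qgraded G x D n :=
  Submodule.mem_inf.mpr ⟨h1, h2⟩

lemma Qgraded_mul {m n : ℤ} {S S' : Matrix X X ℂ} (hS : S ∈ Qgraded G x D m)
    (hS' : S' ∈ Qgraded G x D n) : S * S' ∈ Qgraded G x D (m + n) := by
  obtain ⟨hS1, hS2⟩ := Submodule.mem_inf.mp hS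
  obtain ⟨hS'1, hS'2⟩ := Submodule.mem_inf.mp hS'
  exact mem_Qgraded G x D (mul_mem hS1 hS'1)
    (Tgraded_mul G x D (Qalg_le_Talg G x D hS1) hS2 hS'2)

lemma one_mem_Qgraded (hD : ∀ y, G.dist x y ≤ D) : (1 : Matrix X X ℂ) ∈ Qgraded G x D 0 := by
  refine mem_Qgraded G x D (one_mem _) ?_
  rw [← sum_Estar G x D hD]
  refine Submodule.sum_mem _ (fun k _ => Submodule.subset_span ⟨(k : ℤ), 1, one_mem _, ?_⟩)
  rw [add_zero, mul_one, Estar_mul_Estar, if_pos rfl]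

lemma lowerM_mem_Qgraded : lowerM G x D ∈ Qgraded G x D (-1) := by
  refine mem_Qgraded G x D (Algebra.subset_adjoin (by simp)) ?_
  refine Submodule.sum_mem _ (fun i _ => Submodule.subset_span
    ⟨(i : ℤ), adjMat G, adjMat_mem_T G x D, ?_⟩)
  rw [show (i : ℤ) + (-1) = (i : ℤ) - 1 by ring]

lemma flatM_mem_Qgraded : flatM G x D ∈ Qgraded G x D 0 := by
  refine mem_Qgraded G x D (Algebra.subset_adjoin (by simp)) ?_
  refine Submodule.sum_mem _ (fun i _ => Submodule.subset_span
    ⟨(i : ℤ), adjMat G, adjMat_mem_T G x D, ?_⟩)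
  rw [add_zero]

lemma raiseM_mem_Qgraded : raiseM G x D ∈ Qgraded G x D 1 := by
  refine mem_Qgraded G x D (Algebra.subset_adjoin (by simp)) ?_
  exact Submodule.sum_mem _ (fun i _ => Submodule.subset_span
    ⟨(i : ℤ), adjMat G, adjMat_mem_T G x D, rfl⟩)

end Aux

theorem stmt14 {X : Type*} [Fintype X] [DecidableEq X]
    (G : SimpleGraph X) [DecidableRel G.Adj] (hG : G.Connected) (x : X) (D : ℕ)
    (hD : ∀ y, G.dist x y ≤ D) (hD2 : ∃ y, G.dist x y = D)
    (W : Submodule ℂ (X → ℂ)) (hW : IsIrredMod (Talg G x D) W)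
    (r d : ℕ) (hrd : HasEndpointDiam G x W r d) :
    ∀ i j : ℤ, (r : ℤ) ≤ j → j ≤ (r : ℤ) + (d : ℤ) →
      actSp (Qgraded G x D i) (Emap G x j W) = Emap G x (i + j) W := by
  intro i j hj1 hj2
  have hW1 := hW.1
  -- each graded piece of the action lands in the right weight space
  have hcomp : ∀ n : ℤ, actSp (Qgraded G x D n) (Emap G x j W) ≤ Emap G x (n + j) W := by
    intro n
    have hle : {v | ∃ S ∈ Qgraded G x D n, ∃ w ∈ Emap G x j W, v = S.mulVec w} ⊆
        ↑(Emap G x (n + j) W) := by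
      rintro v ⟨S, hS, w, hw, rfl⟩
      obtain ⟨w', hw', rfl⟩ := Submodule.mem_map.mp hw
      have hc := Tgraded_comm G x D (Submodule.mem_inf.mp hS).2 (n + j)
      rw [show n + j - n = j by ring] at hc
      refine Submodule.mem_map.mpr ⟨S.mulVec w',
        hW1 S (Qalg_le_Talg G x D (Submodule.mem_inf.mp hS).1) w' hw', ?_⟩
      simp only [Matrix.mulVecLin_apply, Matrix.mulVec_mulVec]
      rw [hc]
    exact Submodule.span_le.mpr hle
  have hEmapW : ∀ m : ℤ, Emap G x m W ≤ W := by
    intro m v hv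
    obtain ⟨w, hw, rfl⟩ := Submodule.mem_map.mp hv
    rw [Matrix.mulVecLin_apply]
    exact hW1 _ (Estar_mem_T G x D hD m) w hw
  have hWle : (⨆ n : ℤ, actSp (Qgraded G x D n) (Emap G x j W)) ≤ W :=
    iSup_le fun n => (hcomp n).trans (hEmapW _)
  have hjle : Emap G x j W ≤ ⨆ n : ℤ, actSp (Qgraded G x D n) (Emap G x j W) := by
    refine le_trans ?_ (le_iSup (fun n => actSp (Qgraded G x D n) (Emap G x j W)) (0 : ℤ))
    intro v hv
    have h1 : v = (1 : Matrix X X ℂ).mulVec v := by rw [Matrix.one_mulVec]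
    exact Submodule.subset_span ⟨1, one_mem_Qgraded G x D hD, v, hv, h1⟩
  -- the sup is stable under every graded piece of Q
  have hQact : ∀ (m : ℤ) (S : Matrix X X ℂ), S ∈ Qgraded G x D m →
      ∀ v ∈ (⨆ n : ℤ, actSp (Qgraded G x D n) (Emap G x j W)),
        S.mulVec v ∈ (⨆ n : ℤ, actSp (Qgraded G x D n) (Emap G x j W)) := by
    intro m S hS v hv
    refine Submodule.iSup_induction (motive := fun v =>
        S.mulVec v ∈ (⨆ n : ℤ, actSp (Qgraded G x D n) (Emap G x j W)))
      (fun n => actSp (Qgraded G x D n) (Emap G x j W)) hv ?_ ?_ ?_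
    · intro n w hw
      have hw' : w ∈ Submodule.span ℂ
          {v | ∃ S' ∈ Qgraded G x D n, ∃ u ∈ Emap G x j W, v = S'.mulVec u} := hw
      clear hw
      have : S.mulVec w ∈ actSp (Qgraded G x D (m + n)) (Emap G x j W) := by
        induction hw' using Submodule.span_induction with
        | mem u hu =>
          obtain ⟨S', hS', w', hw'', rfl⟩ := hu
          rw [Matrix.mulVec_mulVec]
          exact Submodule.subset_span ⟨S * S', Qgraded_mul G x D hS hS', w', hw'', rfl⟩
        | zero => rw [Matrix.mulVec_zero]; exact zero_mem _
        | add a b _ _ ha hb => rw [Matrix.mulVec_add]; exact add_mem ha hb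
        | smul c a _ ha => rw [Matrix.mulVec_smul]; exact Submodule.smul_mem _ _ ha
      exact Submodule.mem_iSup_of_mem (m + n) this
    · simp only [Matrix.mulVec_zero]; exact zero_mem _
    · intro a b ha hb; simp only [Matrix.mulVec_add]; exact add_mem ha hb
  -- the sup is stable under the dual idempotents
  have hEact : ∀ (k : ℤ), ∀ v ∈ (⨆ n : ℤ, actSp (Qgraded G x D n) (Emap G x j W)),
      (Estar G x k).mulVec v ∈ (⨆ n : ℤ, actSp (Qgraded G x D n) (Emap G x j W)) := by
    intro k v hv
    refine Submodule.iSup_induction (motive := fun v =>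
        (Estar G x k).mulVec v ∈ (⨆ n : ℤ, actSp (Qgraded G x D n) (Emap G x j W)))
      (fun n => actSp (Qgraded G x D n) (Emap G x j W)) hv ?_ ?_ ?_
    · intro n w hw
      obtain ⟨w', hw', hww⟩ := Submodule.mem_map.mp (hcomp n hw)
      rw [← hww, Matrix.mulVecLin_apply, Matrix.mulVec_mulVec, Estar_mul_Estar]
      split_ifs with h
      · rw [h, show Estar G x (n + j) *ᵥ w' = w from by rw [← hww, Matrix.mulVecLin_apply]]
        exact Submodule.mem_iSup_of_mem n hw
      · rw [Matrix.zero_mulVec]; exact zero_mem _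
    · simp only [Matrix.mulVec_zero]; exact zero_mem _
    · intro a b ha hb; simp only [Matrix.mulVec_add]; exact add_mem ha hb
  -- hence the sup is a T-submodule
  have hTact : ∀ S ∈ Talg G x D, ∀ v ∈ (⨆ n : ℤ, actSp (Qgraded G x D n) (Emap G x j W)),
      S.mulVec v ∈ (⨆ n : ℤ, actSp (Qgraded G x D n) (Emap G x j W)) := by
    intro S hS
    have hS' : S ∈ Algebra.adjoin ℂ
        (insert (adjMat G) (Estar G x '' Set.Icc (0 : ℤ) (D : ℤ))) := hS
    clear hS
    induction hS' using Algebra.adjoin_induction with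
    | mem S hSgen =>
      rcases Set.mem_insert_iff.mp hSgen with rfl | ⟨k, hk, rfl⟩
      · intro v hv
        rw [adj_decomp G x D hG hD, Matrix.add_mulVec, Matrix.add_mulVec]
        exact add_mem (add_mem (hQact (-1) _ (lowerM_mem_Qgraded G x D) v hv)
          (hQact 0 _ (flatM_mem_Qgraded G x D) v hv))
          (hQact 1 _ (raiseM_mem_Qgraded G x D) v hv)
      · exact fun v hv => hEact k v hv
    | algebraMap c =>
      intro v hv
      rw [Algebra.algebraMap_eq_smul_one, Matrix.smul_mulVec, Matrix.one_mulVec]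
      exact Submodule.smul_mem _ _ hv
    | add a b _ _ ha hb =>
      intro v hv; rw [Matrix.add_mulVec]; exact add_mem (ha v hv) (hb v hv)
    | mul a b _ _ ha hb =>
      intro v hv; rw [← Matrix.mulVec_mulVec]; exact ha _ (hb v hv)
  -- irreducibility: the sup equals W
  have hne : (⨆ n : ℤ, actSp (Qgraded G x D n) (Emap G x j W)) ≠ ⊥ := by
    intro hbot
    exact (hrd j).mpr ⟨hj1, hj2⟩ (le_bot_iff.mp (hbot ▸ hjle))
  have hWeq : (⨆ n : ℤ, actSp (Qgraded G x D n) (Emap G x j W)) = W :=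
    (hW.2.2 _ hWle hTact).resolve_left hne
  -- conclude
  refine le_antisymm (hcomp i) ?_
  rintro v hv
  obtain ⟨w, hw, rfl⟩ := Submodule.mem_map.mp hv
  rw [Matrix.mulVecLin_apply]
  rw [← hWeq] at hw
  refine Submodule.iSup_induction (motive := fun w =>
      Estar G x (i + j) *ᵥ w ∈ actSp (Qgraded G x D i) (Emap G x j W))
    (fun n => actSp (Qgraded G x D n) (Emap G x j W)) hw ?_ ?_ ?_
  · intro n u hu
    have hu' : u ∈ Submodule.span ℂ
        {v | ∃ S ∈ Qgraded G x D n, ∃ w ∈ Emap G x j W, v = S.mulVec w} := hu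
    clear hu
    induction hu' using Submodule.span_induction with
    | mem u hu2 =>
      obtain ⟨S, hS, w', hw', rfl⟩ := hu2
      obtain ⟨w₂, hw₂, rfl⟩ := Submodule.mem_map.mp hw'
      have hc := Tgraded_comm G x D (Submodule.mem_inf.mp hS).2 (i + j)
      simp only [Matrix.mulVecLin_apply, Matrix.mulVec_mulVec]
      rw [← mul_assoc, hc, mul_assoc, Estar_mul_Estar]
      split_ifs with h
      · have hn : n = i := by omega
        rw [h, ← Matrix.mulVec_mulVec]
        exact Submodule.subset_span
          ⟨S, hn ▸ hS, Estar G x j *ᵥ w₂, ⟨w₂, hw₂, Matrix.mulVecLin_apply _ _⟩, rfl⟩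
      · rw [mul_zero, Matrix.zero_mulVec]; exact zero_mem _
    | zero => rw [Matrix.mulVec_zero]; exact zero_mem _
    | add a b _ _ ha hb => rw [Matrix.mulVec_add]; exact add_mem ha hb
    | smul c a _ ha => rw [Matrix.mulVec_smul]; exact Submodule.smul_mem _ _ ha
  · simp only [Matrix.mulVec_zero]; exact zero_mem _
  · intro a b ha hb; simp only [Matrix.mulVec_add]; exact add_mem ha hb
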